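/- Under the hypotheses of the convex BTARD-SGD analysis — f L-smooth and convex with minimizer x*, R₀ ≥ ‖x⁰ − x*‖, 0 < γ ≤ 1/(4L), per-step conditional bounds E[ḡ^k | F_k] = ∇f(x^k), E[‖ĝ^k − ḡ^k‖² | F_k] ≤ C·δ̂_k·σ², E[‖ĝ^k‖² | F_k] ≤ 2C·δ̂_k·σ² + 2‖∇f(x^k)‖² + 2σ²/N, x^{k+1} = x^k − γ·ĝ^k, and the stepsize conditions 2γ²σ²K/N ≤ R₀²/3, 2√2·γ·√C·σ·R₀·∑_{k<K}√(E[δ̂_k]) ≤ R₀²/3, 2γ²·C·σ²·∑_{k<K}E[δ̂_k] ≤ R₀²/3 — the iterates remain bounded in expectation: E[‖x^k − x*‖²] ≤ 2R₀² for every k = 0, 1, …, K. -/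

import Mathlib

open MeasureTheory ProbabilityTheory

noncomputable section

set_option linter.unusedSectionVars false
set_option maxHeartbeats 2000000

section Helpers

local notation "⟪" a ", " b "⟫" => @inner ℝ _ _ a b

variable {E : Type*} [NormedAddCommGroup E] [InnerProductSpace ℝ E] [CompleteSpace E]

lemma line_hasDerivAt (f : E → ℝ) (hdiff : Differentiable ℝ f) (a v : E) (t : ℝ) :
    HasDerivAt (fun s : ℝ => f (a + s • v)) ⟪gradient f (a + t • v), v⟫ t := by
  have h1 : HasDerivAt (fun s : ℝ => a + s • v) v t := by
    simpa using ((hasDerivAt_id t).smul_const v).const_add a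
  have h2 := (hdiff (a + t • v)).hasGradientAt
  rw [hasGradientAt_iff_hasFDerivAt] at h2
  have h3 := h2.comp_hasDerivAt t h1
  simpa [Function.comp_def] using h3

lemma convex_grad_ineq (f : E → ℝ) (hconv : ConvexOn ℝ Set.univ f)
    (hdiff : Differentiable ℝ f) (a b : E) :
    f a + ⟪gradient f a, b - a⟫ ≤ f b := by
  have hg : ConvexOn ℝ Set.univ (fun t : ℝ => f (a + t • (b - a))) := by
    have := hconv.comp_affineMap (AffineMap.lineMap a b)
    simp only [Set.preimage_univ] at this
    refine this.congr fun t _ => ?_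
    simp only [Function.comp_apply, AffineMap.lineMap_apply_module]
    congr 1
    module
  have hd0 : HasDerivAt (fun t : ℝ => f (a + t • (b - a))) ⟪gradient f a, b - a⟫ 0 := by
    have := line_hasDerivAt f hdiff a (b - a) 0
    simpa using this
  have hs := hg.le_slope_of_hasDerivAt (Set.mem_univ (0:ℝ)) (Set.mem_univ (1:ℝ)) one_pos hd0
  rw [slope_def_field] at hs
  simp at hs ⊢
  linarith

lemma gradient_continuous (f : E → ℝ) {L : ℝ} (hL : 0 < L)
    (hsmooth : ∀ y z, ‖gradient f y - gradient f z‖ ≤ L * ‖y - z‖) :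
    Continuous fun p : E => gradient f p := by
  refine (LipschitzWith.of_dist_le_mul (K := L.toNNReal) fun y z => ?_).continuous
  rw [dist_eq_norm, dist_eq_norm, Real.coe_toNNReal _ hL.le]
  exact hsmooth y z

lemma descent_lemma (f : E → ℝ) {L : ℝ} (hL : 0 < L) (hdiff : Differentiable ℝ f)
    (hsmooth : ∀ y z, ‖gradient f y - gradient f z‖ ≤ L * ‖y - z‖) (a v : E) :
    f (a + v) ≤ f a + ⟪gradient f a, v⟫ + L / 2 * ‖v‖ ^ 2 := by
  set φ : ℝ → ℝ := fun t => ⟪gradient f (a + t • v), v⟫ with hφ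
  have hφc : Continuous φ :=
    ((gradient_continuous f hL hsmooth).comp (by continuity)).inner continuous_const
  have hFTC := intervalIntegral.integral_eq_sub_of_hasDerivAt
    (f := fun s : ℝ => f (a + s • v)) (f' := φ)
    (fun t _ => line_hasDerivAt f hdiff a v t) (hφc.intervalIntegrable 0 1)
  have hψc : Continuous fun t : ℝ => ⟪gradient f a, v⟫ + L * ‖v‖ ^ 2 * t := by continuity
  have hmono : ∫ t in (0:ℝ)..1, φ t ≤
      ∫ t in (0:ℝ)..1, (⟪gradient f a, v⟫ + L * ‖v‖ ^ 2 * t) := by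
    apply intervalIntegral.integral_mono_on zero_le_one (hφc.intervalIntegrable 0 1)
      (hψc.intervalIntegrable 0 1)
    intro t ht
    have h1 : φ t - ⟪gradient f a, v⟫ = ⟪gradient f (a + t • v) - gradient f a, v⟫ := by
      rw [inner_sub_left]
    have h2 : ⟪gradient f (a + t • v) - gradient f a, v⟫ ≤ L * t * ‖v‖ ^ 2 := by
      calc ⟪gradient f (a + t • v) - gradient f a, v⟫
          ≤ ‖gradient f (a + t • v) - gradient f a‖ * ‖v‖ :=
            real_inner_le_norm _ _
        _ ≤ (L * ‖(a + t • v) - a‖) * ‖v‖ := by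
            apply mul_le_mul_of_nonneg_right (hsmooth _ _) (norm_nonneg _)
        _ = L * t * ‖v‖ ^ 2 := by
            rw [add_sub_cancel_left, norm_smul, Real.norm_eq_abs, abs_of_nonneg ht.1]
            ring
    nlinarith [h2]
  have hInt : ∫ t in (0:ℝ)..1, (⟪gradient f a, v⟫ + L * ‖v‖ ^ 2 * t)
      = ⟪gradient f a, v⟫ + L / 2 * ‖v‖ ^ 2 := by
    rw [intervalIntegral.integral_add (intervalIntegrable_const)
      (by exact (Continuous.intervalIntegrable (by continuity) 0 1))]
    rw [intervalIntegral.integral_const_mul, integral_id, intervalIntegral.integral_const]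
    norm_num
    ring
  rw [hInt] at hmono
  rw [one_smul, zero_smul, add_zero] at hFTC
  linarith

lemma grad_sq_le_of_min (f : E → ℝ) {L : ℝ} (hL : 0 < L) (hdiff : Differentiable ℝ f)
    (hsmooth : ∀ y z, ‖gradient f y - gradient f z‖ ≤ L * ‖y - z‖)
    (xstar : E) (hmin : ∀ y, f xstar ≤ f y) (a : E) :
    ‖gradient f a‖ ^ 2 ≤ 2 * L * (f a - f xstar) := by
  have hd := descent_lemma f hL hdiff hsmooth a (-(L⁻¹ • gradient f a))
  have h1 : ⟪gradient f a, -(L⁻¹ • gradient f a)⟫ = -(L⁻¹ * ‖gradient f a‖ ^ 2) := by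
    rw [inner_neg_right, real_inner_smul_right, real_inner_self_eq_norm_sq]
  have h2 : ‖-(L⁻¹ • gradient f a)‖ ^ 2 = L⁻¹ ^ 2 * ‖gradient f a‖ ^ 2 := by
    rw [norm_neg, norm_smul, Real.norm_eq_abs, mul_pow, sq_abs]
  have h3 := hmin (a + -(L⁻¹ • gradient f a))
  rw [h1, h2] at hd
  have hL' : L ≠ 0 := hL.ne'
  have key : f xstar ≤ f a - ‖gradient f a‖ ^ 2 / (2 * L) := by
    refine h3.trans (hd.trans_eq ?_)
    field_simp
    ring
  have h4 : ‖gradient f a‖ ^ 2 / (2 * L) ≤ f a - f xstar := by linarith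
  calc ‖gradient f a‖ ^ 2 = (‖gradient f a‖ ^ 2 / (2 * L)) * (2 * L) := by field_simp
    _ ≤ (f a - f xstar) * (2 * L) := by nlinarith
    _ = 2 * L * (f a - f xstar) := by ring

variable {Ω : Type*} {m0 : MeasurableSpace Ω} {P : Measure Ω} [IsProbabilityMeasure P]

lemma sq_norm_integrable {f : Ω → E} (hf : MemLp f 2 P) :
    Integrable (fun ω => ‖f ω‖ ^ 2) P :=
  (memLp_two_iff_integrable_sq_norm hf.aestronglyMeasurable).mp hf

lemma inner_integrable {f g : Ω → E} (hf : MemLp f 2 P) (hg : MemLp g 2 P) :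
    Integrable (fun ω => ⟪f ω, g ω⟫) P := by
  refine Integrable.mono' (((sq_norm_integrable hf).add (sq_norm_integrable hg)).const_mul
    (1/2)) (hf.aestronglyMeasurable.inner hg.aestronglyMeasurable) ?_
  filter_upwards with ω
  rw [Real.norm_eq_abs]
  have h1 := abs_real_inner_le_norm (f ω) (g ω)
  simp only [Pi.add_apply]
  nlinarith [sq_nonneg (‖f ω‖ - ‖g ω‖), norm_nonneg (f ω), norm_nonneg (g ω)]

lemma mul_integrable {f g : Ω → ℝ} (hf : MemLp f 2 P) (hg : MemLp g 2 P) :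
    Integrable (fun ω => f ω * g ω) P := by
  simpa [RCLike.inner_apply, conj_trivial] using inner_integrable (E := ℝ) hg hf

lemma integral_mul_le_sqrt_mul_sqrt {f g : Ω → ℝ} (hf : MemLp f 2 P) (hg : MemLp g 2 P)
    (hf0 : ∀ ω, 0 ≤ f ω) (hg0 : ∀ ω, 0 ≤ g ω) :
    ∫ ω, f ω * g ω ∂P ≤ Real.sqrt (∫ ω, f ω ^ 2 ∂P) * Real.sqrt (∫ ω, g ω ^ 2 ∂P) := by
  have hpq : Real.HolderConjugate 2 2 := Real.HolderConjugate.two_two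
  have h2 : ENNReal.ofReal (2:ℝ) = 2 := by norm_num
  have h3 := integral_mul_le_Lp_mul_Lq_of_nonneg hpq
    (Filter.Eventually.of_forall hf0) (Filter.Eventually.of_forall hg0)
    (h2 ▸ hf) (h2 ▸ hg)
  calc ∫ ω, f ω * g ω ∂P
      ≤ (∫ ω, f ω ^ (2:ℝ) ∂P) ^ (1/2:ℝ) * (∫ ω, g ω ^ (2:ℝ) ∂P) ^ (1/2:ℝ) := h3
    _ = Real.sqrt (∫ ω, f ω ^ 2 ∂P) * Real.sqrt (∫ ω, g ω ^ 2 ∂P) := by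
        rw [← Real.sqrt_eq_rpow, ← Real.sqrt_eq_rpow]
        norm_num

lemma integral_le_of_condexp_le {m : MeasurableSpace Ω} (hm : m ≤ m0) {g b : Ω → ℝ}
    (hb : Integrable b P) (h : ∀ᵐ ω ∂P, (P[g|m]) ω ≤ b ω) :
    ∫ ω, g ω ∂P ≤ ∫ ω, b ω ∂P := by
  rw [← integral_condExp hm (f := g)]
  exact integral_mono_ae integrable_condExp hb h

lemma integral_inner_condexp_zero {d : ℕ} {m : MeasurableSpace Ω} (hm : m ≤ m0)
    {y u : Ω → EuclideanSpace ℝ (Fin d)}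
    (hym : StronglyMeasurable[m] y) (hyL2 : MemLp y 2 P) (huL2 : MemLp u 2 P)
    (hcond : P[u|m] =ᵐ[P] 0) :
    ∫ ω, ⟪y ω, u ω⟫ ∂P = 0 := by
  letI : MeasurableSpace Ω := m0
  have hu : Integrable u P := huL2.integrable one_le_two
  have hcoord : ∀ i : Fin d, ∫ ω, y ω i * u ω i ∂P = 0 := by
    intro i
    set pr := EuclideanSpace.proj (𝕜 := ℝ) i with hpr
    have hyiL2 : MemLp (fun ω => y ω i) 2 P := pr.comp_memLp' hyL2
    have huiL2 : MemLp (fun ω => u ω i) 2 P := pr.comp_memLp' huL2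
    have hui_int : Integrable (fun ω => u ω i) P := huiL2.integrable one_le_two
    have hprod_int : Integrable (fun ω => y ω i * u ω i) P := mul_integrable hyiL2 huiL2
    have hyim : StronglyMeasurable[m] (fun ω => y ω i) :=
      pr.continuous.comp_stronglyMeasurable hym
    have hzero : (0 : Ω → ℝ) =ᵐ[P] P[fun ω => u ω i|m] := by
      refine ae_eq_condExp_of_forall_setIntegral_eq hm hui_int
        (fun s _ _ => integrableOn_zero) (fun s hs hμs => ?_)
        stronglyMeasurable_zero.aestronglyMeasurable
      have hsm0 : MeasurableSet[m0] s := hm s hs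
      have h1 : ∫ x in s, u x ∂P = 0 := by
        rw [← setIntegral_condExp hm hu hs]
        calc ∫ x in s, (P[u|m]) x ∂P = ∫ x in s, (0 : EuclideanSpace ℝ (Fin d)) ∂P :=
              integral_congr_ae (ae_restrict_of_ae hcond)
          _ = 0 := by simp
      have h2 : ∫ x in s, u x i ∂P = pr (∫ x in s, u x ∂P) :=
        pr.integral_comp_comm hu.integrableOn
      rw [h2, h1]
      simp
    have hmul := condExp_mul_of_stronglyMeasurable_left (μ := P) hyim
      (by exact hprod_int) hui_int
    have heq : P[fun ω => y ω i * u ω i|m] =ᵐ[P] 0 := by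
      refine hmul.trans ?_
      filter_upwards [hzero] with ω hω
      simp [Pi.mul_apply, ← hω]
    calc ∫ ω, y ω i * u ω i ∂P = ∫ ω, (P[fun ω => y ω i * u ω i|m]) ω ∂P :=
          (integral_condExp hm).symm
      _ = ∫ ω, (0:ℝ) ∂P := integral_congr_ae heq
      _ = 0 := by simp
  have hrw : (fun ω => ⟪y ω, u ω⟫) = fun ω => ∑ i, y ω i * u ω i := by
    funext ω
    simp [PiLp.inner_apply, RCLike.inner_apply, conj_trivial]
    exact Finset.sum_congr rfl fun _ _ => mul_comm _ _
  rw [hrw, integral_finset_sum]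
  · simp [hcoord]
  · intro i _
    exact mul_integrable (((EuclideanSpace.proj (𝕜 := ℝ) i)).comp_memLp' hyL2)
      (((EuclideanSpace.proj (𝕜 := ℝ) i)).comp_memLp' huL2)

end Helpers

end

noncomputable section

set_option linter.unusedSectionVars false
set_option maxHeartbeats 2000000

local notation "⟪" a ", " b "⟫" => @inner ℝ _ _ a b

/-- Under the hypotheses of the convex BTARD-SGD analysis, the iterates
remain bounded in expectation: `E[‖x^k − x*‖²] ≤ 2R₀²` for every `k = 0, 1, …, K`. -/
theorem btard_sgd_convex_iterates_bounded
    {Ω : Type*} {m0 : MeasurableSpace Ω} (P : Measure Ω) [IsProbabilityMeasure P]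
    (ℱ : Filtration ℕ m0) {d : ℕ}
    (f : EuclideanSpace ℝ (Fin d) → ℝ) (L : ℝ) (hL : 0 < L)
    (hdiff : Differentiable ℝ f)
    (hsmooth : ∀ y z, ‖gradient f y - gradient f z‖ ≤ L * ‖y - z‖)
    (hconv : ConvexOn ℝ Set.univ f)
    (xstar : EuclideanSpace ℝ (Fin d)) (hmin : ∀ y, f xstar ≤ f y)
    (K N : ℕ) (hK : 0 < K) (hN : 1 ≤ N)
    (γ C σ R₀ : ℝ) (hγ : 0 < γ) (hγL : γ ≤ 1 / (4 * L)) (hC : 0 ≤ C) (hσ : 0 ≤ σ)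
    (x0 : EuclideanSpace ℝ (Fin d)) (hR₀ : ‖x0 - xstar‖ ≤ R₀)
    (x ghat gbar : ℕ → Ω → EuclideanSpace ℝ (Fin d)) (δhat : ℕ → Ω → ℝ)
    (hx0 : x 0 = fun _ => x0)
    (hxmeas : ∀ k < K, StronglyMeasurable[ℱ k] (x k))
    (hδmeas : ∀ k < K, StronglyMeasurable[ℱ k] (δhat k))
    (hδnonneg : ∀ k < K, ∀ ω, 0 ≤ δhat k ω)
    (hδint : ∀ k < K, Integrable (δhat k) P)
    (hgbarint : ∀ k < K, Integrable (gbar k) P)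
    (hghatint : ∀ k < K, Integrable (ghat k) P)
    (hdevint : ∀ k < K, Integrable (fun ω => ‖ghat k ω - gbar k ω‖ ^ 2) P)
    (hsecint : ∀ k < K, Integrable (fun ω => ‖ghat k ω‖ ^ 2) P)
    (hfint : ∀ k < K, Integrable (fun ω => f (x k ω)) P)
    (hgradint : ∀ k < K, Integrable (fun ω => ‖gradient f (x k ω)‖ ^ 2) P)
    (hmean : ∀ k < K, P[gbar k|ℱ k] =ᵐ[P] fun ω => gradient f (x k ω))
    (hdev : ∀ k < K, ∀ᵐ ω ∂P,
      (P[fun ω' => ‖ghat k ω' - gbar k ω'‖ ^ 2|ℱ k]) ω ≤ C * δhat k ω * σ ^ 2)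
    (hsec : ∀ k < K, ∀ᵐ ω ∂P,
      (P[fun ω' => ‖ghat k ω'‖ ^ 2|ℱ k]) ω
        ≤ 2 * C * δhat k ω * σ ^ 2 + 2 * ‖gradient f (x k ω)‖ ^ 2 + 2 * σ ^ 2 / N)
    (hupd : ∀ k < K, ∀ ω, x (k + 1) ω = x k ω - γ • ghat k ω)
    (hcond1 : 2 * γ ^ 2 * σ ^ 2 * K / N ≤ R₀ ^ 2 / 3)
    (hcond2 : 2 * Real.sqrt 2 * γ * Real.sqrt C * σ * R₀ *
        ∑ k ∈ Finset.range K, Real.sqrt (∫ ω, δhat k ω ∂P) ≤ R₀ ^ 2 / 3)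
    (hcond3 : 2 * γ ^ 2 * C * σ ^ 2 *
        ∑ k ∈ Finset.range K, (∫ ω, δhat k ω ∂P) ≤ R₀ ^ 2 / 3) :
    ∀ k ≤ K, ∫ ω, ‖x k ω - xstar‖ ^ 2 ∂P ≤ 2 * R₀ ^ 2 := by
  have hR0 : 0 ≤ R₀ := le_trans (norm_nonneg _) hR₀
  have hNpos : (0:ℝ) < N := by exact_mod_cast lt_of_lt_of_le zero_lt_one hN
  have hgc : Continuous fun p => gradient f p := gradient_continuous f hL hsmooth
  obtain ⟨D, hD⟩ : ∃ D : ℕ → ℝ, ∀ k, D k = ∫ ω, ‖x k ω - xstar‖ ^ 2 ∂P :=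
    ⟨_, fun _ => rfl⟩
  obtain ⟨dd, hdd⟩ : ∃ dd : ℕ → ℝ, ∀ k, dd k = ∫ ω, δhat k ω ∂P := ⟨_, fun _ => rfl⟩
  simp only [← hdd] at hcond2 hcond3
  suffices hfin : ∀ k ≤ K, D k ≤ 2 * R₀ ^ 2 by
    intro k hk
    rw [← hD k]
    exact hfin k hk
  have hddnonneg : ∀ k, k < K → 0 ≤ dd k := fun k hk => by
    rw [hdd k]; exact integral_nonneg (hδnonneg k hk)
  have hDnonneg : ∀ k, 0 ≤ D k := fun k => by
    rw [hD k]; exact integral_nonneg fun ω => sq_nonneg _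
  -- the iterates are in L²
  have hxL2 : ∀ k, k ≤ K → MemLp (fun ω => x k ω - xstar) 2 P := by
    intro k
    induction k with
    | zero =>
      intro _
      have h0 : (fun ω => x 0 ω - xstar) = fun _ => x0 - xstar := by rw [hx0]
      rw [h0]
      exact memLp_const _
    | succ n ih =>
      intro hn
      have hnK : n < K := hn
      have hgL2 : MemLp (ghat n) 2 P :=
        (memLp_two_iff_integrable_sq_norm (hghatint n hnK).aestronglyMeasurable).mpr
          (hsecint n hnK)
      have hEq : (fun ω => x (n+1) ω - xstar)
          = fun ω => (x n ω - xstar) - γ • ghat n ω := by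
        funext ω
        rw [hupd n hnK ω]
        abel
      rw [hEq]
      exact (ih hnK.le).sub (hgL2.const_smul γ)
  -- main one-step recursion
  have hrec : ∀ k, k < K →
      D (k+1) ≤ D k + 2*γ*(Real.sqrt C * σ * Real.sqrt (dd k)) * Real.sqrt (D k)
        + 2*γ^2*C*σ^2*(dd k) + 2*γ^2*σ^2/N := by
    intro k hk
    have hmK : ℱ k ≤ m0 := ℱ.le k
    obtain ⟨y, hy⟩ : ∃ y : Ω → EuclideanSpace ℝ (Fin d), y = fun ω => x k ω - xstar :=
      ⟨_, rfl⟩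
    have hyF : StronglyMeasurable[ℱ k] y := by
      rw [hy]; exact (hxmeas k hk).sub stronglyMeasurable_const
    have hyL2 : MemLp y 2 P := by rw [hy]; exact hxL2 k hk.le
    have hgaesm : AEStronglyMeasurable (ghat k) P := (hghatint k hk).aestronglyMeasurable
    have hgbaesm : AEStronglyMeasurable (gbar k) P := (hgbarint k hk).aestronglyMeasurable
    have hgL2 : MemLp (ghat k) 2 P :=
      (memLp_two_iff_integrable_sq_norm hgaesm).mpr (hsecint k hk)
    have hwL2 : MemLp (fun ω => ghat k ω - gbar k ω) 2 P :=
      (memLp_two_iff_integrable_sq_norm (hgaesm.sub hgbaesm)).mpr (hdevint k hk)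
    have hgbL2 : MemLp (gbar k) 2 P :=
      (hgL2.sub hwL2).ae_eq (Filter.Eventually.of_forall fun ω => by
        show ghat k ω - (ghat k ω - gbar k ω) = gbar k ω
        abel)
    have hhF : StronglyMeasurable[ℱ k] (fun ω => gradient f (x k ω)) :=
      hgc.comp_stronglyMeasurable (hxmeas k hk)
    have hhaesm : AEStronglyMeasurable (fun ω => gradient f (x k ω)) P :=
      (hhF.mono hmK).aestronglyMeasurable
    have hhL2 : MemLp (fun ω => gradient f (x k ω)) 2 P :=
      (memLp_two_iff_integrable_sq_norm hhaesm).mpr (hgradint k hk)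
    have hh_int : Integrable (fun ω => gradient f (x k ω)) P := hhL2.integrable one_le_two
    -- conditional mean of gbar - grad is zero
    have hucond : P[fun ω => gbar k ω - gradient f (x k ω)|ℱ k] =ᵐ[P] 0 := by
      have h1 := condExp_sub (μ := P) (m := ℱ k) (hgbarint k hk) hh_int
      have h2 : P[fun ω => gradient f (x k ω)|ℱ k] = fun ω => gradient f (x k ω) :=
        condExp_of_stronglyMeasurable hmK hhF hh_int
      refine (Filter.EventuallyEq.trans ?_ h1).trans ?_
      · rfl
      rw [h2]
      filter_upwards [hmean k hk] with ω hω
      simp only [Pi.sub_apply, Pi.zero_apply, hω]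
      abel
    have horth : ∫ ω, ⟪y ω, gbar k ω - gradient f (x k ω)⟫ ∂P = 0 :=
      integral_inner_condexp_zero hmK hyF hyL2 (hgbL2.sub hhL2) hucond
    -- expansion of the squared norm
    have hexp : ∀ ω, ‖x (k+1) ω - xstar‖^2
        = ‖y ω‖^2 - 2*γ*⟪y ω, ghat k ω⟫ + γ^2*‖ghat k ω‖^2 := by
      intro ω
      have h5 : x (k+1) ω - xstar = y ω - γ • ghat k ω := by
        rw [hupd k hk ω, hy, sub_right_comm]
      rw [h5, norm_sub_sq_real, real_inner_smul_right, norm_smul, mul_pow,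
        Real.norm_eq_abs, sq_abs]
      ring
    have hyint2 : Integrable (fun ω => ‖y ω‖^2) P := sq_norm_integrable hyL2
    have hinner_int : Integrable (fun ω => ⟪y ω, ghat k ω⟫) P := inner_integrable hyL2 hgL2
    have hinner_w_int : Integrable (fun ω => ⟪y ω, ghat k ω - gbar k ω⟫) P :=
      inner_integrable hyL2 hwL2
    have hinner_u_int : Integrable (fun ω => ⟪y ω, gbar k ω - gradient f (x k ω)⟫) P :=
      inner_integrable hyL2 (hgbL2.sub hhL2)
    have hinner_h_int : Integrable (fun ω => ⟪y ω, gradient f (x k ω)⟫) P :=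
      inner_integrable hyL2 hhL2
    have hg2int := hsecint k hk
    have hDk : D k = ∫ ω, ‖y ω‖^2 ∂P := by
      rw [hD k, hy]
    have hD1 : D (k+1) = D k - 2*γ*(∫ ω, ⟪y ω, ghat k ω⟫ ∂P)
        + γ^2*(∫ ω, ‖ghat k ω‖^2 ∂P) := by
      have e1 : D (k+1)
          = ∫ ω, (‖y ω‖^2 - 2*γ*⟪y ω, ghat k ω⟫ + γ^2*‖ghat k ω‖^2) ∂P := by
        rw [hD (k+1)]
        exact integral_congr_ae (Filter.Eventually.of_forall hexp)
      have e2 : ∫ ω, (‖y ω‖^2 - 2*γ*⟪y ω, ghat k ω⟫ + γ^2*‖ghat k ω‖^2) ∂P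
          = (∫ ω, (‖y ω‖^2 - 2*γ*⟪y ω, ghat k ω⟫) ∂P) + ∫ ω, γ^2*‖ghat k ω‖^2 ∂P :=
        integral_add (hyint2.sub (hinner_int.const_mul (2*γ))) (hg2int.const_mul (γ^2))
      have e3 : ∫ ω, (‖y ω‖^2 - 2*γ*⟪y ω, ghat k ω⟫) ∂P
          = (∫ ω, ‖y ω‖^2 ∂P) - ∫ ω, 2*γ*⟪y ω, ghat k ω⟫ ∂P :=
        integral_sub hyint2 (hinner_int.const_mul (2*γ))
      rw [e1, e2, e3, integral_const_mul, integral_const_mul, hDk]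
    -- split the inner product integral
    have hsplit : ∫ ω, ⟪y ω, ghat k ω⟫ ∂P
        = (∫ ω, ⟪y ω, ghat k ω - gbar k ω⟫ ∂P)
          + ∫ ω, ⟪y ω, gradient f (x k ω)⟫ ∂P := by
      have h1 : ∀ ω, ⟪y ω, ghat k ω⟫
          = ⟪y ω, ghat k ω - gbar k ω⟫ + ⟪y ω, gbar k ω - gradient f (x k ω)⟫
            + ⟪y ω, gradient f (x k ω)⟫ := by
        intro ω
        rw [← inner_add_right, ← inner_add_right]
        congr 1
        abel
      calc ∫ ω, ⟪y ω, ghat k ω⟫ ∂P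
          = ∫ ω, (⟪y ω, ghat k ω - gbar k ω⟫ + ⟪y ω, gbar k ω - gradient f (x k ω)⟫
              + ⟪y ω, gradient f (x k ω)⟫) ∂P :=
            integral_congr_ae (Filter.Eventually.of_forall h1)
        _ = (∫ ω, ⟪y ω, ghat k ω - gbar k ω⟫ ∂P)
              + (∫ ω, ⟪y ω, gbar k ω - gradient f (x k ω)⟫ ∂P)
              + ∫ ω, ⟪y ω, gradient f (x k ω)⟫ ∂P := by
            have e4 : ∫ ω, ((⟪y ω, ghat k ω - gbar k ω⟫ + ⟪y ω, gbar k ω - gradient f (x k ω)⟫)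
                + ⟪y ω, gradient f (x k ω)⟫) ∂P
                = (∫ ω, (⟪y ω, ghat k ω - gbar k ω⟫ + ⟪y ω, gbar k ω - gradient f (x k ω)⟫) ∂P)
                  + ∫ ω, ⟪y ω, gradient f (x k ω)⟫ ∂P :=
              integral_add (hinner_w_int.add hinner_u_int) hinner_h_int
            have e5 : ∫ ω, (⟪y ω, ghat k ω - gbar k ω⟫ + ⟪y ω, gbar k ω - gradient f (x k ω)⟫) ∂P
                = (∫ ω, ⟪y ω, ghat k ω - gbar k ω⟫ ∂P)
                  + ∫ ω, ⟪y ω, gbar k ω - gradient f (x k ω)⟫ ∂P :=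
              integral_add hinner_w_int hinner_u_int
            rw [e4, e5]
        _ = _ := by rw [horth]; ring
    -- variance-type bound
    have hw2 : ∫ ω, ‖ghat k ω - gbar k ω‖^2 ∂P ≤ C*σ^2*(dd k) := by
      have hb : Integrable (fun ω => C * δhat k ω * σ^2) P :=
        ((hδint k hk).const_mul C).mul_const (σ^2)
      have h1 := integral_le_of_condexp_le hmK hb (hdev k hk)
      refine h1.trans_eq ?_
      rw [hdd k, ← integral_const_mul]
      exact integral_congr_ae (Filter.Eventually.of_forall fun ω => by ring)
    -- second moment bound
    have hg2 : ∫ ω, ‖ghat k ω‖^2 ∂P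
        ≤ 2*C*σ^2*(dd k) + 2*(∫ ω, ‖gradient f (x k ω)‖^2 ∂P) + 2*σ^2/N := by
      have i1 : Integrable (fun ω => 2*C*δhat k ω*σ^2) P :=
        ((hδint k hk).const_mul (2*C)).mul_const (σ^2)
      have i2 : Integrable (fun ω => 2*‖gradient f (x k ω)‖^2) P :=
        (hgradint k hk).const_mul 2
      have hb : Integrable
          (fun ω => 2*C*δhat k ω*σ^2 + 2*‖gradient f (x k ω)‖^2 + 2*σ^2/(N:ℝ)) P :=
        (i1.add i2).add (integrable_const _)
      have h1 := integral_le_of_condexp_le hmK hb (hsec k hk)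
      refine h1.trans_eq ?_
      have e1 : ∫ ω, (2*C*δhat k ω*σ^2 + 2*‖gradient f (x k ω)‖^2 + 2*σ^2/(N:ℝ)) ∂P
          = (∫ ω, (2*C*δhat k ω*σ^2 + 2*‖gradient f (x k ω)‖^2) ∂P)
            + ∫ ω, (2*σ^2/(N:ℝ)) ∂P :=
        integral_add (i1.add i2) (integrable_const _)
      have e2 : ∫ ω, (2*C*δhat k ω*σ^2 + 2*‖gradient f (x k ω)‖^2) ∂P
          = (∫ ω, 2*C*δhat k ω*σ^2 ∂P) + ∫ ω, 2*‖gradient f (x k ω)‖^2 ∂P :=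
        integral_add i1 i2
      have e3 : ∫ ω, 2*C*δhat k ω*σ^2 ∂P = 2*C*σ^2 * dd k := by
        rw [hdd k, ← integral_const_mul]
        exact integral_congr_ae (Filter.Eventually.of_forall fun ω => by ring)
      have e4 : ∫ ω, 2*‖gradient f (x k ω)‖^2 ∂P
          = 2 * ∫ ω, ‖gradient f (x k ω)‖^2 ∂P := integral_const_mul 2 _
      have e5 : ∫ ω, (2*σ^2/(N:ℝ)) ∂P = 2*σ^2/(N:ℝ) := by
        simp [integral_const, measure_univ]
      rw [e1, e2, e3, e4, e5]
    -- Cauchy-Schwarz bound on the bias term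
    have hcs : -(Real.sqrt C * σ * Real.sqrt (dd k) * Real.sqrt (D k))
        ≤ ∫ ω, ⟪y ω, ghat k ω - gbar k ω⟫ ∂P := by
      have h2 := integral_mul_le_sqrt_mul_sqrt (hyL2.norm)
        (hwL2.norm) (fun ω => norm_nonneg _) (fun ω => norm_nonneg _)
      have h1 : ∫ ω, ‖y ω‖ * ‖ghat k ω - gbar k ω‖ ∂P
          ≤ Real.sqrt (D k) * Real.sqrt (C*σ^2*(dd k)) := by
        rw [hDk]
        refine h2.trans ?_
        exact mul_le_mul_of_nonneg_left (Real.sqrt_le_sqrt hw2) (Real.sqrt_nonneg _)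
      have h3 : ∀ ω, -(‖y ω‖ * ‖ghat k ω - gbar k ω‖) ≤ ⟪y ω, ghat k ω - gbar k ω⟫ :=
        fun ω => (abs_le.mp (abs_real_inner_le_norm _ _)).1
      have h4 : -(∫ ω, ‖y ω‖ * ‖ghat k ω - gbar k ω‖ ∂P)
          ≤ ∫ ω, ⟪y ω, ghat k ω - gbar k ω⟫ ∂P := by
        rw [← integral_neg]
        exact integral_mono_ae ((mul_integrable hyL2.norm hwL2.norm).neg) hinner_w_int
          (Filter.Eventually.of_forall h3)
      have h5 : Real.sqrt (C*σ^2*(dd k)) = Real.sqrt C * σ * Real.sqrt (dd k) := by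
        rw [Real.sqrt_mul (by positivity), Real.sqrt_mul hC, Real.sqrt_sq hσ]
      refine le_trans ?_ h4
      rw [h5] at h1
      have h6 := neg_le_neg h1
      calc -(Real.sqrt C * σ * Real.sqrt (dd k) * Real.sqrt (D k))
          = -(Real.sqrt (D k) * (Real.sqrt C * σ * Real.sqrt (dd k))) := by ring
        _ ≤ -(∫ ω, ‖y ω‖ * ‖ghat k ω - gbar k ω‖ ∂P) := h6
    -- convexity + smoothness term
    have hkey : ∀ ω, 2*γ^2*‖gradient f (x k ω)‖^2 ≤ 2*γ*⟪y ω, gradient f (x k ω)⟫ := by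
      intro ω
      have hA := convex_grad_ineq f hconv hdiff (x k ω) xstar
      have hB := grad_sq_le_of_min f hL hdiff hsmooth xstar hmin (x k ω)
      have hfge : f (x k ω) - f xstar ≤ ⟪gradient f (x k ω), x k ω - xstar⟫ := by
        have hneg : ⟪gradient f (x k ω), xstar - x k ω⟫
            = -⟪gradient f (x k ω), x k ω - xstar⟫ := by
          rw [← inner_neg_right, neg_sub]
        linarith [hA, hneg]
      have hcomm : ⟪y ω, gradient f (x k ω)⟫ = ⟪gradient f (x k ω), x k ω - xstar⟫ := by
        rw [hy]; exact real_inner_comm _ _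
      have h4L : (0:ℝ) < 4*L := by linarith
      have hγ4L : γ * (4*L) ≤ 1 := by
        rw [le_div_iff₀ h4L] at hγL
        exact hγL
      have hfstar : 0 ≤ f (x k ω) - f xstar := by linarith [hmin (x k ω)]
      rw [hcomm]
      nlinarith [sq_nonneg (‖gradient f (x k ω)‖), mul_nonneg hγ.le hfstar,
        mul_nonneg (mul_nonneg hγ.le hγ.le) (sq_nonneg ‖gradient f (x k ω)‖),
        mul_le_mul_of_nonneg_left hB (mul_nonneg hγ.le hγ.le),
        mul_le_mul_of_nonneg_left hfge hγ.le]
    have hgradterm : 2*γ^2*(∫ ω, ‖gradient f (x k ω)‖^2 ∂P)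
        ≤ 2*γ*(∫ ω, ⟪y ω, gradient f (x k ω)⟫ ∂P) := by
      calc 2*γ^2*(∫ ω, ‖gradient f (x k ω)‖^2 ∂P)
          = ∫ ω, 2*γ^2*‖gradient f (x k ω)‖^2 ∂P := (integral_const_mul _ _).symm
        _ ≤ ∫ ω, 2*γ*⟪y ω, gradient f (x k ω)⟫ ∂P :=
            integral_mono ((hgradint k hk).const_mul _) (hinner_h_int.const_mul _) hkey
        _ = 2*γ*(∫ ω, ⟪y ω, gradient f (x k ω)⟫ ∂P) := integral_const_mul _ _
    -- assemble
    rw [hD1, hsplit]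
    set W := ∫ ω, ⟪y ω, ghat k ω - gbar k ω⟫ ∂P with hW
    set H := ∫ ω, ⟪y ω, gradient f (x k ω)⟫ ∂P with hH
    set G := ∫ ω, ‖ghat k ω‖^2 ∂P with hG
    set Gn := ∫ ω, ‖gradient f (x k ω)‖^2 ∂P with hGn
    have e1 : γ^2*G ≤ γ^2*(2*C*σ^2*(dd k) + 2*Gn + 2*σ^2/N) :=
      mul_le_mul_of_nonneg_left hg2 (sq_nonneg γ)
    have e2 : -(2*γ*W) ≤ 2*γ*(Real.sqrt C*σ*Real.sqrt (dd k)*Real.sqrt (D k)) :=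
      calc -(2*γ*W) = 2*γ*(-W) := by ring
        _ ≤ 2*γ*(Real.sqrt C*σ*Real.sqrt (dd k)*Real.sqrt (D k)) :=
            mul_le_mul_of_nonneg_left (by linarith [hcs]) (by positivity)
    have hgt := hgradterm
    ring_nf at e1 e2 hgt ⊢
    linarith [e1, e2, hgt]
  -- final induction
  obtain ⟨S, hS⟩ : ∃ S : ℕ → ℝ, ∀ k, S k = R₀^2
      + (2*Real.sqrt 2*γ*Real.sqrt C*σ*R₀) * (∑ j ∈ Finset.range k, Real.sqrt (dd j))
      + (2*γ^2*C*σ^2) * (∑ j ∈ Finset.range k, dd j) + 2*γ^2*σ^2*k/N :=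
    ⟨_, fun _ => rfl⟩
  have hSle : ∀ k, k ≤ K → S k ≤ 2*R₀^2 := by
    intro k hkK
    have hsub : Finset.range k ⊆ Finset.range K := Finset.range_subset_range.mpr hkK
    have c1 : (2*Real.sqrt 2*γ*Real.sqrt C*σ*R₀) * (∑ j ∈ Finset.range k, Real.sqrt (dd j))
        ≤ R₀^2/3 := by
      refine le_trans ?_ hcond2
      have := Finset.sum_le_sum_of_subset_of_nonneg hsub
        (fun j _ _ => Real.sqrt_nonneg (dd j))
      calc (2*Real.sqrt 2*γ*Real.sqrt C*σ*R₀) * (∑ j ∈ Finset.range k, Real.sqrt (dd j))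
          ≤ (2*Real.sqrt 2*γ*Real.sqrt C*σ*R₀) * (∑ j ∈ Finset.range K, Real.sqrt (dd j)) :=
            mul_le_mul_of_nonneg_left this (by positivity)
        _ = 2*Real.sqrt 2*γ*Real.sqrt C*σ*R₀ * ∑ j ∈ Finset.range K, Real.sqrt (dd j) := by
            ring
    have c2 : (2*γ^2*C*σ^2) * (∑ j ∈ Finset.range k, dd j) ≤ R₀^2/3 := by
      refine le_trans ?_ hcond3
      have := Finset.sum_le_sum_of_subset_of_nonneg hsub
        (fun j hj _ => hddnonneg j (Finset.mem_range.mp hj))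
      calc (2*γ^2*C*σ^2) * (∑ j ∈ Finset.range k, dd j)
          ≤ (2*γ^2*C*σ^2) * (∑ j ∈ Finset.range K, dd j) :=
            mul_le_mul_of_nonneg_left this (by positivity)
        _ = 2*γ^2*C*σ^2 * ∑ j ∈ Finset.range K, dd j := by ring
    have c3 : 2*γ^2*σ^2*(k:ℝ)/N ≤ R₀^2/3 := by
      refine le_trans ?_ hcond1
      have hkK' : (k:ℝ) ≤ K := Nat.cast_le.mpr hkK
      gcongr
    rw [hS k]
    linarith
  have hclaim : ∀ k, k ≤ K → D k ≤ S k := by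
    intro k
    induction k with
    | zero =>
      intro _
      have hD0 : D 0 = ‖x0 - xstar‖^2 := by
        rw [hD 0]
        simp only [hx0]
        rw [integral_const]
        simp [measure_univ]
      rw [hD0, hS 0]
      simp only [Finset.range_zero, Finset.sum_empty, mul_zero, add_zero, Nat.cast_zero,
        zero_div]
      have := pow_le_pow_left₀ (norm_nonneg _) hR₀ 2
      linarith
    | succ n ih =>
      intro hn
      have hnK : n < K := hn
      have hDn : D n ≤ 2*R₀^2 := (ih hnK.le).trans (hSle n hnK.le)
      have hsq : Real.sqrt (D n) ≤ Real.sqrt 2 * R₀ := by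
        have h := Real.sqrt_le_sqrt hDn
        rwa [Real.sqrt_mul (by norm_num) (R₀^2), Real.sqrt_sq hR0] at h
      have hterm : 2*γ*(Real.sqrt C*σ*Real.sqrt (dd n))*Real.sqrt (D n)
          ≤ (2*Real.sqrt 2*γ*Real.sqrt C*σ*R₀)*Real.sqrt (dd n) := by
        calc 2*γ*(Real.sqrt C*σ*Real.sqrt (dd n))*Real.sqrt (D n)
            ≤ 2*γ*(Real.sqrt C*σ*Real.sqrt (dd n))*(Real.sqrt 2 * R₀) :=
              mul_le_mul_of_nonneg_left hsq (by positivity)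
          _ = (2*Real.sqrt 2*γ*Real.sqrt C*σ*R₀)*Real.sqrt (dd n) := by ring
      have hSsucc : S (n+1) = S n + (2*Real.sqrt 2*γ*Real.sqrt C*σ*R₀)*Real.sqrt (dd n)
          + (2*γ^2*C*σ^2)*(dd n) + 2*γ^2*σ^2/N := by
        rw [hS (n+1), hS n]
        rw [Finset.sum_range_succ, Finset.sum_range_succ]
        push_cast
        ring
      have hr := hrec n hnK
      rw [hSsucc]
      have hihn := ih hnK.le
      ring_nf at hterm hr ⊢
      linarith [hihn, hterm, hr]
  intro k hk
  exact (hclaim k hk).trans (hSle k hk)
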